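/- arXiv:2602.11859 — 3 statements merged into one kernel-verified Lean document; each statement's English description precedes it below -/
import Mathlib

section
/- Fix s ∈ X and Λ ≥ 1, and assume that for every k ≥ 0 one has (∑_{w∈W_k} a_s(w)) · (∑_{w∈W_k} a_s(w)^{-1}) ≤ Λ m^{2k} in [0,∞] (with 1/0 := +∞). Then N ↦ R_N(s) is nondecreasing, the limit R_∞(s) := lim_{N→∞} R_N(s) exists in (0,∞], and S(s) ≤ R_∞(s) ≤ Λ S(s), where S(s) := ∑_{k=0}^∞ m^k/(u_{2k+1}(s) − u_{2k}(s)) ∈ (0,∞] (a term with zero denominator being +∞). In particular, R_∞(s) < ∞ (equivalently, the limiting capacity Cap_∞(s) := 1/R_∞(s) is positive) if and only if S(s) < ∞. -/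
open Filter Topology
open scoped BigOperators ComplexOrder ENNReal
open scoped NNReal

/-- A kernel `J : X × X → ℂ` is positive definite: every finite Gram sum
`∑ conj (c α) * c β * J (s α) (s β)` is a nonnegative real number
(using the partial order on `ℂ`). -/
def IsPD {X : Type*} (J : X → X → ℂ) : Prop :=
  ∀ (r : ℕ) (c : Fin r → ℂ) (p : Fin r → X),
    0 ≤ ∑ α, ∑ β, (starRingEnd ℂ) (c α) * c β * J (p α) (p β)

/-- The pullback operator `(LJ)(s,t) = ∑ i, J (φ i s) (φ i t)`. -/
noncomputable def pullback {X : Type*} (m : ℕ) (φ : Fin m → X → X) (J : X → X → ℂ) :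
    X → X → ℂ :=
  fun s t => ∑ i, J (φ i s) (φ i t)

/-- For a word `w = i₁⋯iₙ ∈ {1,…,m}ⁿ`, `phiW φ w = φ_{iₙ} ∘ ⋯ ∘ φ_{i₁}`. -/
def phiW {X : Type*} {m : ℕ} (φ : Fin m → X → X) : {n : ℕ} → (Fin n → Fin m) → X → X
  | 0, _, x => x
  | n + 1, w, x => φ (w (Fin.last n)) (phiW φ (fun i => w i.castSucc) x)

/-- The tower `K₀ = K`, `K_{n+1} = L Kₙ`. -/
noncomputable def tower {X : Type*} (m : ℕ) (φ : Fin m → X → X) (K : X → X → ℂ) :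
    ℕ → X → X → ℂ
  | 0 => K
  | n + 1 => pullback m φ (tower m φ K n)

/-- The diagonal `uₙ(s) = Kₙ(s,s)` (a real number, as `Kₙ` is p.d.). -/
noncomputable def diag {X : Type*} (m : ℕ) (φ : Fin m → X → X) (K : X → X → ℂ)
    (n : ℕ) (s : X) : ℝ :=
  (tower m φ K n s s).re

/-- The diagonal increment `a_s(w) = u_{|w|+1}(φ_w s) − u_{|w|}(φ_w s)`. -/
noncomputable def incr {X : Type*} (m : ℕ) (φ : Fin m → X → X) (K : X → X → ℂ)
    (s : X) {k : ℕ} (w : Fin k → Fin m) : ℝ :=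
  diag m φ K (k + 1) (phiW φ w s) - diag m φ K k (phiW φ w s)

section PD
variable {X : Type*} {m : ℕ} {φ : Fin m → X → X}

lemma isPD_diag_re_nonneg {J : X → X → ℂ} (hJ : IsPD J) (t : X) : 0 ≤ (J t t).re := by
  have h := hJ 1 (fun _ => 1) (fun _ => t)
  simp at h
  exact (Complex.le_def.mp h).1

lemma isPD_pullback {J : X → X → ℂ} (hJ : IsPD J) : IsPD (pullback m φ J) := by
  intro r c p
  have key : ∀ i : Fin m,
      0 ≤ ∑ α, ∑ β, (starRingEnd ℂ) (c α) * c β * J (φ i (p α)) (φ i (p β)) :=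
    fun i => hJ r c fun a => φ i (p a)
  calc (0:ℂ) ≤ ∑ i : Fin m, ∑ α, ∑ β,
        (starRingEnd ℂ) (c α) * c β * J (φ i (p α)) (φ i (p β)) :=
        Finset.sum_nonneg fun i _ => key i
    _ = ∑ α, ∑ β, (starRingEnd ℂ) (c α) * c β * pullback m φ J (p α) (p β) := by
        unfold pullback
        simp_rw [Finset.mul_sum]
        exact Finset.sum_comm.trans (Finset.sum_congr rfl fun α _ => Finset.sum_comm)

lemma isPD_tower {J : X → X → ℂ} (hJ : IsPD J) (n : ℕ) : IsPD (tower m φ J n) := by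
  induction n with
  | zero => exact hJ
  | succ n ih => exact isPD_pullback ih

lemma tower_succ_sub (K : X → X → ℂ) : ∀ (n : ℕ) (s t : X),
    tower m φ K (n+1) s t - tower m φ K n s t
      = tower m φ (fun a b => pullback m φ K a b - K a b) n s t := by
  intro n
  induction n with
  | zero => intro s t; rfl
  | succ n ih =>
    intro s t
    show pullback m φ (tower m φ K (n+1)) s t - pullback m φ (tower m φ K n) s t
      = pullback m φ (tower m φ (fun a b => pullback m φ K a b - K a b) n) s t
    unfold pullback
    rw [← Finset.sum_sub_distrib]
    exact Finset.sum_congr rfl fun i _ => ih (φ i s) (φ i t)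

lemma tower_tower (J : X → X → ℂ) (k : ℕ) : ∀ n : ℕ,
    tower m φ (tower m φ J k) n = tower m φ J (k + n)
  | 0 => rfl
  | (n+1) => by
    show pullback m φ (tower m φ (tower m φ J k) n) = pullback m φ (tower m φ J (k+n))
    rw [tower_tower J k n]

lemma phiW_cons : ∀ {k : ℕ} (w : Fin k → Fin m) (i : Fin m) (s : X),
    phiW φ (Fin.cons i w) s = phiW φ w (φ i s) := by
  intro k
  induction k with
  | zero => intro w i s; rfl
  | succ k ih =>
    intro w i s
    have h1 : (Fin.cons i w : Fin (k+2) → Fin m) (Fin.last (k+1)) = w (Fin.last k) := by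
      have h : Fin.last (k+1) = (Fin.last k).succ := rfl
      rw [h, Fin.cons_succ]
    have h2 : (fun j : Fin (k+1) => (Fin.cons i w : Fin (k+2) → Fin m) j.castSucc)
        = Fin.cons i (fun j : Fin k => w j.castSucc) := by
      funext j
      induction j using Fin.cases with
      | zero => simp
      | succ j => simp [← Fin.succ_castSucc]
    show φ ((Fin.cons i w : Fin (k+2) → Fin m) (Fin.last (k+1)))
        (phiW φ (fun j : Fin (k+1) => (Fin.cons i w : Fin (k+2) → Fin m) j.castSucc) s)
      = φ (w (Fin.last k)) (phiW φ (fun j : Fin k => w j.castSucc) (φ i s))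
    rw [h1, h2, ih]

def consE (m k : ℕ) : (Fin m × (Fin k → Fin m)) ≃ (Fin (k+1) → Fin m) where
  toFun p := Fin.cons p.1 p.2
  invFun w := (w 0, Fin.tail w)
  left_inv p := by simp [Fin.tail_cons]
  right_inv w := Fin.cons_self_tail w

def snocE (m k : ℕ) : ((Fin k → Fin m) × Fin m) ≃ (Fin (k+1) → Fin m) where
  toFun p := Fin.snoc p.1 p.2
  invFun w := (Fin.init w, w (Fin.last k))
  left_inv p := by simp [Fin.init_snoc, Fin.snoc_last]
  right_inv w := Fin.snoc_init_self w

lemma tower_eq_sum_word (J : X → X → ℂ) : ∀ (k : ℕ) (s t : X),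
    tower m φ J k s t = ∑ w : Fin k → Fin m, J (phiW φ w s) (phiW φ w t) := by
  intro k
  induction k with
  | zero =>
    intro s t
    rw [Fintype.sum_unique]
    rfl
  | succ k ih =>
    intro s t
    show pullback m φ (tower m φ J k) s t = _
    unfold pullback
    rw [← Fintype.sum_equiv (consE m k)
      (fun p => J (phiW φ (Fin.cons p.1 p.2) s) (phiW φ (Fin.cons p.1 p.2) t))
      (fun w => J (phiW φ w s) (phiW φ w t))
      (fun p => rfl)]
    rw [Fintype.sum_prod_type]
    refine Finset.sum_congr rfl fun i _ => ?_
    rw [ih (φ i s) (φ i t)]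
    exact Finset.sum_congr rfl fun w _ => by rw [phiW_cons, phiW_cons]

end PD


section PD2
variable {X : Type*} {m : ℕ} {φ : Fin m → X → X}

lemma incr_eq_tower (K : X → X → ℂ) (s : X) {k : ℕ} (w : Fin k → Fin m) :
    incr m φ K s w
      = (tower m φ (fun a b => pullback m φ K a b - K a b) k
          (phiW φ w s) (phiW φ w s)).re := by
  rw [← tower_succ_sub K k]
  unfold incr diag
  rw [Complex.sub_re]

lemma incr_nonneg {K : X → X → ℂ}
    (hsub : IsPD (fun a b => pullback m φ K a b - K a b)) (s : X) {k : ℕ}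
    (w : Fin k → Fin m) : 0 ≤ incr m φ K s w := by
  rw [incr_eq_tower]
  exact isPD_diag_re_nonneg (isPD_tower hsub k) _

lemma sum_incr (K : X → X → ℂ) (s : X) (k : ℕ) :
    ∑ w : Fin k → Fin m, incr m φ K s w
      = diag m φ K (2*k+1) s - diag m φ K (2*k) s := by
  simp_rw [incr_eq_tower K s]
  rw [← Complex.re_sum]
  rw [← tower_eq_sum_word (tower m φ (fun a b => pullback m φ K a b - K a b) k) k s s]
  rw [tower_tower]
  have h2k : k + k = 2 * k := by ring
  rw [h2k]
  unfold diag
  rw [← Complex.sub_re, tower_succ_sub K (2*k) s s]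

end PD2

lemma engel_real {a b c d : ℝ} (ha : 0 ≤ a) (hb : 0 ≤ b) (hc : 0 < c) (hd : 0 < d) :
    (a + b)^2 / (c + d) ≤ a^2/c + b^2/d := by
  rw [div_add_div _ _ hc.ne' hd.ne', div_le_div_iff₀ (by positivity) (by positivity)]
  nlinarith [sq_nonneg (a*d - b*c), mul_pos hc hd]

lemma engel2 (a b c d : ℝ≥0∞) : (a + b)^2 / (c + d) ≤ a^2/c + b^2/d := by
  rcases eq_or_ne c 0 with hc | hc
  · rcases eq_or_ne a 0 with ha | ha
    · simp [ha, hc]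
    · have h : a^2/c = ⊤ := by rw [hc, ENNReal.div_zero (pow_ne_zero 2 ha)]
      simp [h]
  rcases eq_or_ne d 0 with hdz | hdz
  · rcases eq_or_ne b 0 with hb | hb
    · simp [hb, hdz]
    · have h : b^2/d = ⊤ := by rw [hdz, ENNReal.div_zero (pow_ne_zero 2 hb)]
      simp [h]
  rcases eq_or_ne c ⊤ with hct | hct
  · rw [hct, top_add, ENNReal.div_top]
    exact zero_le
  rcases eq_or_ne d ⊤ with hdt | hdt
  · rw [hdt, add_top, ENNReal.div_top]
    exact zero_le
  rcases eq_or_ne a ⊤ with hat | hat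
  · have h : a^2/c = ⊤ := by
      rw [hat, ENNReal.top_pow (by norm_num), ENNReal.top_div_of_ne_top hct]
    simp [h]
  rcases eq_or_ne b ⊤ with hbt | hbt
  · have h : b^2/d = ⊤ := by
      rw [hbt, ENNReal.top_pow (by norm_num), ENNReal.top_div_of_ne_top hdt]
    simp [h]
  lift a to ℝ≥0 using hat
  lift b to ℝ≥0 using hbt
  lift c to ℝ≥0 using hct
  lift d to ℝ≥0 using hdt
  have hc' : c ≠ 0 := by exact_mod_cast hc
  have hd' : d ≠ 0 := by exact_mod_cast hdz
  have key : ((a+b)^2/(c+d) : ℝ≥0) ≤ a^2/c + b^2/d := by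
    rw [← NNReal.coe_le_coe]
    push_cast
    exact engel_real a.coe_nonneg b.coe_nonneg
      (by exact_mod_cast hc'.bot_lt) (by exact_mod_cast hd'.bot_lt)
  calc ((a:ℝ≥0∞) + b)^2 / ((c:ℝ≥0∞) + d) = ((((a+b)^2/(c+d) : ℝ≥0)) : ℝ≥0∞) := by
        rw [ENNReal.coe_div (by simp [hc']), ENNReal.coe_pow, ENNReal.coe_add,
          ENNReal.coe_add]
    _ ≤ (((a^2/c + b^2/d : ℝ≥0)) : ℝ≥0∞) := ENNReal.coe_le_coe.mpr key
    _ = (a:ℝ≥0∞)^2/c + (b:ℝ≥0∞)^2/d := by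
        rw [ENNReal.coe_add, ENNReal.coe_div hc', ENNReal.coe_div hd',
          ENNReal.coe_pow, ENNReal.coe_pow]

lemma engel_sum {ι : Type*} (s : Finset ι) (f c : ι → ℝ≥0∞) :
    (∑ i ∈ s, f i)^2 / (∑ i ∈ s, c i) ≤ ∑ i ∈ s, f i^2 / c i := by
  induction s using Finset.cons_induction with
  | empty => simp
  | cons a s ha ih =>
    rw [Finset.sum_cons, Finset.sum_cons, Finset.sum_cons]
    exact (engel2 _ _ _ _).trans (add_le_add (le_refl _) ih)


/-- level denominator -/
noncomputable def dlev {X : Type*} (m : ℕ) (φ : Fin m → X → X) (K : X → X → ℂ)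
    (s : X) (k : ℕ) : ℝ≥0∞ :=
  ENNReal.ofReal (diag m φ K (2 * k + 1) s - diag m φ K (2 * k) s)


/-- A unit flow to depth `N` on the rooted `m`-ary word tree:
`θ k w i` is the flow through the edge `(w, wi)` with `|w| = k`. -/
def IsUnitFlow (m N : ℕ) (θ : (k : ℕ) → (Fin k → Fin m) → Fin m → ℝ) : Prop :=
  (∀ k, k < N → ∀ (w : Fin k → Fin m) (i : Fin m), 0 ≤ θ k w i) ∧
  (∑ i : Fin m, θ 0 (fun j => j.elim0) i = 1) ∧
  (∀ k, k + 1 < N → ∀ (w : Fin k → Fin m) (i : Fin m),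
    θ k w i = ∑ j : Fin m, θ (k + 1) (Fin.snoc w i) j)

/-- The energy `𝔈_s(θ) = ∑_e θ(e)² / c_s(e) ∈ [0,∞]`, where the edge `(w,wi)`
has conductance `c_s(w,wi) = a_s(w)/m^{|w|+1}` (with `0/0 = 0` and `x/0 = ∞`
for `x > 0`, as in `ℝ≥0∞`). -/
noncomputable def energy {X : Type*} (m : ℕ) (φ : Fin m → X → X) (K : X → X → ℂ)
    (s : X) (N : ℕ) (θ : (k : ℕ) → (Fin k → Fin m) → Fin m → ℝ) : ℝ≥0∞ :=
  ∑ k ∈ Finset.range N, ∑ w : Fin k → Fin m, ∑ i : Fin m,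
    ENNReal.ofReal (θ k w i) ^ 2 / ENNReal.ofReal (incr m φ K s w / (m : ℝ) ^ (k + 1))

/-- The effective resistance `R_N(s)`: infimum of the energy over unit flows to depth `N`. -/
noncomputable def resistance {X : Type*} (m : ℕ) (φ : Fin m → X → X) (K : X → X → ℂ)
    (s : X) (N : ℕ) : ℝ≥0∞ :=
  ⨅ (θ : (k : ℕ) → (Fin k → Fin m) → Fin m → ℝ) (_ : IsUnitFlow m N θ),
    energy m φ K s N θ

/-- The scalar series `S(s) = ∑ₖ m^k / (u_{2k+1}(s) − u_{2k}(s)) ∈ [0,∞]`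
(a term with zero denominator being `+∞`). -/
noncomputable def Sser {X : Type*} (m : ℕ) (φ : Fin m → X → X) (K : X → X → ℂ)
    (s : X) : ℝ≥0∞ :=
  ∑' k : ℕ,
    (m : ℝ≥0∞) ^ k / ENNReal.ofReal (diag m φ K (2 * k + 1) s - diag m φ K (2 * k) s)

/-- Under the level concentration hypothesis at every level: the resistances are
nondecreasing in the depth, the limit `R_∞(s)` exists in `(0,∞]`, it is comparable to
the scalar series `S(s)` up to the factor `Λ`, and `R_∞(s) < ∞` (i.e. the limiting
capacity `1/R_∞(s)` is positive) if and only if `S(s) < ∞`. -/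
theorem stmt4 {X : Type*} (m : ℕ) (hm : 1 ≤ m) (φ : Fin m → X → X)
    (K : X → X → ℂ) (hK : IsPD K)
    (hsub : IsPD (fun s t => pullback m φ K s t - K s t))
    (s : X) (Λ : ℝ) (hΛ : 1 ≤ Λ)
    (hconc : ∀ k : ℕ,
      (∑ w : Fin k → Fin m, ENNReal.ofReal (incr m φ K s w)) *
          (∑ w : Fin k → Fin m, (ENNReal.ofReal (incr m φ K s w))⁻¹)
        ≤ ENNReal.ofReal Λ * (m : ℝ≥0∞) ^ (2 * k)) :
    (∀ N₁ N₂ : ℕ, 1 ≤ N₁ → N₁ ≤ N₂ →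
      resistance m φ K s N₁ ≤ resistance m φ K s N₂) ∧
    ∃ Rinf : ℝ≥0∞,
      Tendsto (fun N => resistance m φ K s N) atTop (𝓝 Rinf) ∧
      0 < Rinf ∧
      Sser m φ K s ≤ Rinf ∧
      Rinf ≤ ENNReal.ofReal Λ * Sser m φ K s ∧
      (Rinf < ⊤ ↔ Sser m φ K s < ⊤) := by
  have hmn : m ≠ 0 := by omega
  have hmR : (0:ℝ) < m := by exact_mod_cast Nat.pos_of_ne_zero hmn
  have hmE0 : (m:ℝ≥0∞) ≠ 0 := by exact_mod_cast hmn
  have hmEt : (m:ℝ≥0∞) ≠ ⊤ := ENNReal.natCast_ne_top m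
  have hPne0 : ∀ k:ℕ, ((m:ℝ≥0∞))^k ≠ 0 := fun k => pow_ne_zero k hmE0
  have hPnet : ∀ k:ℕ, ((m:ℝ≥0∞))^k ≠ ⊤ := fun k => ENNReal.pow_ne_top hmEt
  have hnn : ∀ (k:ℕ) (w : Fin k → Fin m), 0 ≤ incr m φ K s w :=
    fun k w => incr_nonneg hsub s w
  have hdt : ∀ k, dlev m φ K s k ≠ ⊤ := fun k => ENNReal.ofReal_ne_top
  have hsumI : ∀ k : ℕ,
      (∑ w : Fin k → Fin m, ENNReal.ofReal (incr m φ K s w)) = dlev m φ K s k := by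
    intro k
    rw [← ENNReal.ofReal_sum_of_nonneg (fun w _ => hnn k w), sum_incr]
    rfl
  have hSser : Sser m φ K s = ∑' k, (m:ℝ≥0∞)^k / dlev m φ K s k := rfl
  -- conductance rewrite
  have hc : ∀ (k:ℕ) (w : Fin k → Fin m),
      ENNReal.ofReal (incr m φ K s w / (m:ℝ)^(k+1))
        = ENNReal.ofReal (incr m φ K s w) / (m:ℝ≥0∞)^(k+1) := by
    intro k w
    rw [ENNReal.ofReal_div_of_pos (pow_pos hmR _), ENNReal.ofReal_pow hmR.le,
      ENNReal.ofReal_natCast]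
  have hmP : ∀ k : ℕ, (m:ℝ≥0∞) * (((m:ℝ≥0∞))^(k+1))⁻¹ = (((m:ℝ≥0∞))^k)⁻¹ := by
    intro k
    rw [pow_succ, ENNReal.mul_inv (Or.inl (hPne0 k)) (Or.inl (hPnet k))]
    calc (m:ℝ≥0∞) * (((m:ℝ≥0∞)^k)⁻¹ * (m:ℝ≥0∞)⁻¹)
        = ((m:ℝ≥0∞) * (m:ℝ≥0∞)⁻¹) * ((m:ℝ≥0∞)^k)⁻¹ := by ring
      _ = ((m:ℝ≥0∞)^k)⁻¹ := by rw [ENNReal.mul_inv_cancel hmE0 hmEt, one_mul]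
  -- level conductance sum
  have hC : ∀ k : ℕ, (∑ w : Fin k → Fin m, ∑ _i : Fin m,
      ENNReal.ofReal (incr m φ K s w / (m:ℝ)^(k+1))) = dlev m φ K s k / (m:ℝ≥0∞)^k := by
    intro k
    simp_rw [hc k]
    simp only [Finset.sum_const, Finset.card_univ, Fintype.card_fin, nsmul_eq_mul]
    simp only [div_eq_mul_inv]
    calc ∑ x : Fin k → Fin m,
          (m:ℝ≥0∞) * (ENNReal.ofReal (incr m φ K s x) * (((m:ℝ≥0∞))^(k+1))⁻¹)
        = ∑ x : Fin k → Fin m,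
          ENNReal.ofReal (incr m φ K s x) * ((m:ℝ≥0∞) * (((m:ℝ≥0∞))^(k+1))⁻¹) :=
          Finset.sum_congr rfl fun x _ => by ring
      _ = dlev m φ K s k * (((m:ℝ≥0∞))^k)⁻¹ := by
          rw [← Finset.sum_mul, hsumI k, hmP k]
  -- flow level totals
  have htotal : ∀ (N:ℕ) (θ), IsUnitFlow m N θ → ∀ k, k < N →
      (∑ w : Fin k → Fin m, ∑ i, θ k w i) = 1 := by
    intro N θ hθ k
    induction k with
    | zero =>
      intro _
      rw [Fintype.sum_unique]
      have h : (default : Fin 0 → Fin m) = (fun j => j.elim0) := Subsingleton.elim _ _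
      rw [h]
      exact hθ.2.1
    | succ k ih =>
      intro hk
      rw [← Fintype.sum_equiv (snocE m k)
        (fun p => ∑ j, θ (k+1) (Fin.snoc p.1 p.2) j)
        (fun w => ∑ j, θ (k+1) w j) (fun p => rfl)]
      rw [Fintype.sum_prod_type]
      calc ∑ w : Fin k → Fin m, ∑ i : Fin m, ∑ j, θ (k+1) (Fin.snoc w i) j
          = ∑ w : Fin k → Fin m, ∑ i : Fin m, θ k w i :=
            Finset.sum_congr rfl fun w _ => Finset.sum_congr rfl fun i _ =>
              (hθ.2.2 k hk w i).symm
        _ = 1 := ih (Nat.lt_of_succ_lt hk)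
  -- lower bound
  have hlow : ∀ N, (∑ k ∈ Finset.range N, (m:ℝ≥0∞)^k / dlev m φ K s k)
      ≤ resistance m φ K s N := by
    intro N
    refine le_iInf fun θ => le_iInf fun hθ => ?_
    unfold energy
    refine Finset.sum_le_sum fun k hk => ?_
    have hkN := Finset.mem_range.mp hk
    have hnum : (∑ w : Fin k → Fin m, ∑ i : Fin m, ENNReal.ofReal (θ k w i)) = 1 := by
      have h1 : ∀ w : Fin k → Fin m,
          (∑ i, ENNReal.ofReal (θ k w i)) = ENNReal.ofReal (∑ i, θ k w i) :=
        fun w => (ENNReal.ofReal_sum_of_nonneg (fun i _ => hθ.1 k hkN w i)).symm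
      simp_rw [h1]
      rw [← ENNReal.ofReal_sum_of_nonneg
        (fun w _ => Finset.sum_nonneg fun i _ => hθ.1 k hkN w i)]
      rw [htotal N θ hθ k hkN, ENNReal.ofReal_one]
    have hengel := engel_sum (Finset.univ : Finset ((Fin k → Fin m) × Fin m))
        (fun p => ENNReal.ofReal (θ k p.1 p.2))
        (fun p => ENNReal.ofReal (incr m φ K s p.1 / (m:ℝ)^(k+1)))
    simp only [Fintype.sum_prod_type] at hengel
    calc (m:ℝ≥0∞)^k / dlev m φ K s k
        = (dlev m φ K s k / (m:ℝ≥0∞)^k)⁻¹ :=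
          (ENNReal.inv_div (Or.inl (hPnet k)) (Or.inl (hPne0 k))).symm
      _ = (∑ w : Fin k → Fin m, ∑ i : Fin m, ENNReal.ofReal (θ k w i))^2
            / (∑ w : Fin k → Fin m, ∑ _i : Fin m,
                ENNReal.ofReal (incr m φ K s w / (m:ℝ)^(k+1))) := by
          rw [hnum, hC k, one_pow, one_div]
      _ ≤ _ := hengel
  -- uniform flow
  have hflowu : ∀ N, IsUnitFlow m N (fun k _ _ => ((m:ℝ)^(k+1))⁻¹) := by
    intro N
    refine ⟨fun k _ w i => by positivity, ?_, ?_⟩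
    · rw [Finset.sum_const, Finset.card_univ, Fintype.card_fin, nsmul_eq_mul]
      rw [pow_one, mul_inv_cancel₀ (ne_of_gt hmR)]
    · intro k _ w i
      rw [Finset.sum_const, Finset.card_univ, Fintype.card_fin, nsmul_eq_mul]
      rw [show k+1+1 = k+2 from rfl, pow_succ ((m:ℝ)) (k+1)]
      rw [mul_inv, ← mul_assoc]
      rw [mul_comm ((m:ℝ)) _, mul_assoc, mul_inv_cancel₀ (ne_of_gt hmR), mul_one]
  have hup : ∀ N, resistance m φ K s N ≤ ENNReal.ofReal Λ * Sser m φ K s := by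
    intro N
    refine le_trans (iInf₂_le _ (hflowu N)) ?_
    unfold energy
    have hlev : ∀ k : ℕ, (∑ w : Fin k → Fin m, ∑ i : Fin m,
        ENNReal.ofReal (((m:ℝ)^(k+1))⁻¹) ^ 2
          / ENNReal.ofReal (incr m φ K s w / (m:ℝ)^(k+1)))
        ≤ ENNReal.ofReal Λ * ((m:ℝ≥0∞)^k / dlev m φ K s k) := by
      intro k
      have hPinv : ENNReal.ofReal (((m:ℝ)^(k+1))⁻¹) = (((m:ℝ≥0∞))^(k+1))⁻¹ := by
        rw [ENNReal.ofReal_inv_of_pos (pow_pos hmR _), ENNReal.ofReal_pow hmR.le,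
          ENNReal.ofReal_natCast]
      have hterm : ∀ w : Fin k → Fin m,
          ENNReal.ofReal (((m:ℝ)^(k+1))⁻¹) ^ 2
            / ENNReal.ofReal (incr m φ K s w / (m:ℝ)^(k+1))
          = (((m:ℝ≥0∞))^(k+1))⁻¹ * (ENNReal.ofReal (incr m φ K s w))⁻¹ := by
        intro w
        rw [hPinv, hc k w]
        rw [div_eq_mul_inv (((m:ℝ≥0∞)^(k+1))⁻¹ ^ 2),
          ENNReal.inv_div (Or.inl (hPnet (k+1))) (Or.inl (hPne0 (k+1)))]
        rw [div_eq_mul_inv ((m:ℝ≥0∞)^(k+1)), pow_two]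
        calc ((m:ℝ≥0∞)^(k+1))⁻¹ * ((m:ℝ≥0∞)^(k+1))⁻¹
              * ((m:ℝ≥0∞)^(k+1) * (ENNReal.ofReal (incr m φ K s w))⁻¹)
            = (((m:ℝ≥0∞)^(k+1))⁻¹ * (m:ℝ≥0∞)^(k+1))
              * (((m:ℝ≥0∞)^(k+1))⁻¹ * (ENNReal.ofReal (incr m φ K s w))⁻¹) := by ring
          _ = (((m:ℝ≥0∞))^(k+1))⁻¹ * (ENNReal.ofReal (incr m φ K s w))⁻¹ := by
              rw [ENNReal.inv_mul_cancel (hPne0 (k+1)) (hPnet (k+1)), one_mul]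
      simp_rw [hterm]
      simp only [Finset.sum_const, Finset.card_univ, Fintype.card_fin, nsmul_eq_mul]
      simp only [← Finset.mul_sum]
      rw [← mul_assoc, hmP k]
      set Y := ∑ w : Fin k → Fin m, (ENNReal.ofReal (incr m φ K s w))⁻¹ with hY
      rcases eq_or_ne (dlev m φ K s k) 0 with h0 | h0
      · have h : (m:ℝ≥0∞)^k / dlev m φ K s k = ⊤ := by
          rw [h0, ENNReal.div_zero (hPne0 k)]
        rw [h, ENNReal.mul_top
          (ENNReal.ofReal_pos.mpr (lt_of_lt_of_le one_pos hΛ)).ne']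
        exact le_top
      · rw [← mul_div_assoc]
        refine (ENNReal.le_div_iff_mul_le (Or.inl h0) (Or.inl (hdt k))).mpr ?_
        have hck := hconc k
        rw [hsumI k, ← hY] at hck
        calc ((m:ℝ≥0∞)^k)⁻¹ * Y * dlev m φ K s k
            = ((m:ℝ≥0∞)^k)⁻¹ * (dlev m φ K s k * Y) := by ring
          _ ≤ ((m:ℝ≥0∞)^k)⁻¹ * (ENNReal.ofReal Λ * (m:ℝ≥0∞)^(2*k)) :=
              mul_le_mul_right hck _
          _ = ENNReal.ofReal Λ * (m:ℝ≥0∞)^k := by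
              rw [show 2*k = k + k by ring, pow_add]
              calc ((m:ℝ≥0∞)^k)⁻¹ * (ENNReal.ofReal Λ * ((m:ℝ≥0∞)^k * (m:ℝ≥0∞)^k))
                  = ENNReal.ofReal Λ * (m:ℝ≥0∞)^k * (((m:ℝ≥0∞)^k)⁻¹ * (m:ℝ≥0∞)^k) := by
                    ring
                _ = ENNReal.ofReal Λ * (m:ℝ≥0∞)^k := by
                    rw [ENNReal.inv_mul_cancel (hPne0 k) (hPnet k), mul_one]
    calc (∑ k ∈ Finset.range N, ∑ w : Fin k → Fin m, ∑ i : Fin m,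
          ENNReal.ofReal (((m:ℝ)^(k+1))⁻¹) ^ 2
            / ENNReal.ofReal (incr m φ K s w / (m:ℝ)^(k+1)))
        ≤ ∑ k ∈ Finset.range N, ENNReal.ofReal Λ * ((m:ℝ≥0∞)^k / dlev m φ K s k) :=
          Finset.sum_le_sum fun k _ => hlev k
      _ = ENNReal.ofReal Λ * ∑ k ∈ Finset.range N, (m:ℝ≥0∞)^k / dlev m φ K s k :=
          (Finset.mul_sum _ _ _).symm
      _ ≤ ENNReal.ofReal Λ * Sser m φ K s := by
          rw [hSser]
          exact mul_le_mul_right (ENNReal.sum_le_tsum _) _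
  -- monotonicity
  have hmono : Monotone (resistance m φ K s) := by
    intro N₁ N₂ h
    refine le_iInf fun θ => le_iInf fun hθ => ?_
    have hθ1 : IsUnitFlow m N₁ θ :=
      ⟨fun k hk => hθ.1 k (lt_of_lt_of_le hk h), hθ.2.1,
        fun k hk => hθ.2.2 k (lt_of_lt_of_le hk h)⟩
    refine le_trans (iInf₂_le θ hθ1) ?_
    unfold energy
    exact Finset.sum_le_sum_of_subset (Finset.range_subset_range.mpr h)
  have hSle : Sser m φ K s ≤ ⨆ N, resistance m φ K s N := by
    rw [hSser, ENNReal.tsum_eq_iSup_nat]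
    exact iSup_le fun N => (hlow N).trans (le_iSup _ N)
  have huple : (⨆ N, resistance m φ K s N) ≤ ENNReal.ofReal Λ * Sser m φ K s :=
    iSup_le hup
  have hpos : 0 < Sser m φ K s := by
    rw [hSser]
    refine lt_of_lt_of_le ?_ (ENNReal.le_tsum 0)
    exact ENNReal.div_pos (by simp) (hdt 0)
  exact ⟨fun N₁ N₂ _ h => hmono h, ⨆ N, resistance m φ K s N, tendsto_atTop_iSup hmono,
    lt_of_lt_of_le hpos hSle, hSle, huple,
    ⟨fun h => lt_of_le_of_lt hSle h,
      fun h => lt_of_le_of_lt huple (ENNReal.mul_lt_top ENNReal.ofReal_lt_top h)⟩⟩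
end

section
/- Let J : X_fin × X_fin → ℂ be a kernel such that J − K is positive definite on X_fin and (LJ)(s,t) = ∑_{i=1}^m J(φ_i(s),φ_i(t)) = J(s,t) for all s,t ∈ X_fin (meaningful since each φ_i maps X_fin into itself). Then J − K_∞ is positive definite on X_fin; that is, K_∞ is the smallest L-invariant majorant of K on X_fin in the kernel order. -/
open Filter Topology
open scoped BigOperators ComplexOrder ENNReal

/-- The finiteness locus `X_fin = {s : u_∞(s) = lim uₙ(s) < ∞}` (the monotone
sequence `uₙ(s)` has a finite limit). -/
def Xfin {X : Type*} (m : ℕ) (φ : Fin m → X → X) (K : X → X → ℂ) : Set X :=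
  {s | ∃ l : ℝ, Filter.Tendsto (fun n => diag m φ K n s) Filter.atTop (nhds l)}

/-- Positive definiteness of a kernel restricted to a subset `Y ⊆ X`. -/
def IsPDOn {X : Type*} (Y : Set X) (J : X → X → ℂ) : Prop :=
  ∀ (r : ℕ) (c : Fin r → ℂ) (p : Fin r → X), (∀ α, p α ∈ Y) →
    0 ≤ ∑ α, ∑ β, (starRingEnd ℂ) (c α) * c β * J (p α) (p β)


lemma pd_pullback {X : Type*} (m : ℕ) (φ : Fin m → X → X) (J : X → X → ℂ)
    (hJ : IsPD J) : IsPD (pullback m φ J) := by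
  intro r c p
  have h1 : ∑ α, ∑ β, (starRingEnd ℂ) (c α) * c β * pullback m φ J (p α) (p β)
      = ∑ i : Fin m, ∑ α, ∑ β, (starRingEnd ℂ) (c α) * c β * J (φ i (p α)) (φ i (p β)) :=
    calc ∑ α, ∑ β, (starRingEnd ℂ) (c α) * c β * pullback m φ J (p α) (p β)
        = ∑ α, ∑ β, ∑ i : Fin m, (starRingEnd ℂ) (c α) * c β * J (φ i (p α)) (φ i (p β)) := by
          simp [pullback, Finset.mul_sum]
      _ = ∑ α, ∑ i : Fin m, ∑ β, (starRingEnd ℂ) (c α) * c β * J (φ i (p α)) (φ i (p β)) :=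
          Finset.sum_congr rfl fun α _ => Finset.sum_comm
      _ = ∑ i : Fin m, ∑ α, ∑ β, (starRingEnd ℂ) (c α) * c β * J (φ i (p α)) (φ i (p β)) :=
          Finset.sum_comm
  rw [h1]
  exact Finset.sum_nonneg fun i _ => hJ r c fun α => φ i (p α)

lemma pd_tower {X : Type*} (m : ℕ) (φ : Fin m → X → X) (K : X → X → ℂ)
    (hK : IsPD K) : ∀ n, IsPD (tower m φ K n)
  | 0 => hK
  | n + 1 => pd_pullback m φ _ (pd_tower m φ K hK n)

lemma pd_tower_step {X : Type*} (m : ℕ) (φ : Fin m → X → X) (K : X → X → ℂ)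
    (hsub : IsPD (fun s t => pullback m φ K s t - K s t)) :
    ∀ n, IsPD (fun s t => tower m φ K (n + 1) s t - tower m φ K n s t)
  | 0 => hsub
  | n + 1 => by
    have heq : (fun s t => tower m φ K (n + 2) s t - tower m φ K (n + 1) s t)
        = pullback m φ (fun s t => tower m φ K (n + 1) s t - tower m φ K n s t) := by
      funext s t
      show pullback m φ (tower m φ K (n + 1)) s t - pullback m φ (tower m φ K n) s t = _
      simp [pullback, Finset.sum_sub_distrib]
    rw [heq]
    exact pd_pullback m φ _ (pd_tower_step m φ K hsub n)

lemma pd_diag_re_nonneg {X : Type*} {J : X → X → ℂ} (hJ : IsPD J) (s : X) :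
    0 ≤ (J s s).re := by
  have h := hJ 1 (fun _ => 1) (fun _ => s)
  simp only [Fin.sum_univ_one, map_one, one_mul] at h
  exact (Complex.le_def.mp h).1

lemma diag_mono {X : Type*} (m : ℕ) (φ : Fin m → X → X) (K : X → X → ℂ)
    (hsub : IsPD (fun s t => pullback m φ K s t - K s t)) (s : X) :
    Monotone fun n => diag m φ K n s := by
  apply monotone_nat_of_le_succ
  intro n
  have h := pd_diag_re_nonneg (pd_tower_step m φ K hsub n) s
  simp only [Complex.sub_re, diag] at h ⊢
  linarith

lemma diag_nonneg {X : Type*} (m : ℕ) (φ : Fin m → X → X) (K : X → X → ℂ)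
    (hK : IsPD K) (n : ℕ) (s : X) : 0 ≤ diag m φ K n s :=
  pd_diag_re_nonneg (pd_tower m φ K hK n) s

lemma xfin_invariant {X : Type*} (m : ℕ) (φ : Fin m → X → X) (K : X → X → ℂ)
    (hK : IsPD K) (hsub : IsPD (fun s t => pullback m φ K s t - K s t))
    (i : Fin m) {s : X} (hs : s ∈ Xfin m φ K) : φ i s ∈ Xfin m φ K := by
  obtain ⟨l, hl⟩ := hs
  have hmono : Monotone fun n => diag m φ K n (φ i s) := diag_mono m φ K hsub _
  have hbd : ∀ n, diag m φ K n (φ i s) ≤ l := by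
    intro n
    have h1 : diag m φ K n (φ i s) ≤ diag m φ K (n + 1) s := by
      have : diag m φ K (n + 1) s = ∑ j : Fin m, (tower m φ K n (φ j s) (φ j s)).re := by
        simp [diag, tower, pullback, Complex.re_sum]
      rw [this]
      exact Finset.single_le_sum
        (fun j _ => diag_nonneg m φ K hK n (φ j s)) (Finset.mem_univ i)
    exact h1.trans (Monotone.ge_of_tendsto (diag_mono m φ K hsub s) hl (n + 1))
  exact ⟨_, tendsto_atTop_ciSup hmono ⟨l, fun x ⟨n, hn⟩ => hn ▸ hbd n⟩⟩

/-- Minimality of the invariant completion: any `L`-invariant majorant `J` of `K`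
on `X_fin` dominates `K_∞` in the kernel order. -/
theorem stmt8 {X : Type*} (m : ℕ) (hm : 1 ≤ m) (φ : Fin m → X → X)
    (K : X → X → ℂ) (hK : IsPD K)
    (hsub : IsPD (fun s t => pullback m φ K s t - K s t))
    (Kinf : X → X → ℂ)
    (hKinf : ∀ s ∈ Xfin m φ K, ∀ t ∈ Xfin m φ K,
      Tendsto (fun n => tower m φ K n s t) atTop (𝓝 (Kinf s t)))
    (J : X → X → ℂ)
    (hJK : IsPDOn (Xfin m φ K) (fun s t => J s t - K s t))
    (hJinv : ∀ s ∈ Xfin m φ K, ∀ t ∈ Xfin m φ K,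
      ∑ i : Fin m, J (φ i s) (φ i t) = J s t) :
    IsPDOn (Xfin m φ K) (fun s t => J s t - Kinf s t) := by
  have hphi : ∀ (i : Fin m) {s : X}, s ∈ Xfin m φ K → φ i s ∈ Xfin m φ K :=
    fun i s hs => xfin_invariant m φ K hK hsub i hs
  have hPDn : ∀ n, IsPDOn (Xfin m φ K) (fun s t => J s t - tower m φ K n s t) := by
    intro n
    induction n with
    | zero => exact hJK
    | succ n ih =>
      intro r c p hp
      have key : ∀ α β, (starRingEnd ℂ) (c α) * c β * (J (p α) (p β) - tower m φ K (n + 1) (p α) (p β))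
          = ∑ i : Fin m, (starRingEnd ℂ) (c α) * c β *
            (J (φ i (p α)) (φ i (p β)) - tower m φ K n (φ i (p α)) (φ i (p β))) := by
        intro α β
        rw [← Finset.mul_sum, Finset.sum_sub_distrib, hJinv _ (hp α) _ (hp β)]
        rfl
      simp only [key]
      have h1 : ∑ α, ∑ β, ∑ i : Fin m, (starRingEnd ℂ) (c α) * c β *
            (J (φ i (p α)) (φ i (p β)) - tower m φ K n (φ i (p α)) (φ i (p β)))
          = ∑ i : Fin m, ∑ α, ∑ β, (starRingEnd ℂ) (c α) * c β *
            (J (φ i (p α)) (φ i (p β)) - tower m φ K n (φ i (p α)) (φ i (p β))) :=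
        calc ∑ α, ∑ β, ∑ i : Fin m, (starRingEnd ℂ) (c α) * c β *
              (J (φ i (p α)) (φ i (p β)) - tower m φ K n (φ i (p α)) (φ i (p β)))
            = ∑ α, ∑ i : Fin m, ∑ β, (starRingEnd ℂ) (c α) * c β *
              (J (φ i (p α)) (φ i (p β)) - tower m φ K n (φ i (p α)) (φ i (p β))) :=
              Finset.sum_congr rfl fun α _ => Finset.sum_comm
          _ = ∑ i : Fin m, ∑ α, ∑ β, (starRingEnd ℂ) (c α) * c β *
              (J (φ i (p α)) (φ i (p β)) - tower m φ K n (φ i (p α)) (φ i (p β))) :=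
              Finset.sum_comm
      rw [h1]
      exact Finset.sum_nonneg fun i _ =>
        ih r c (fun α => φ i (p α)) fun α => hphi i (hp α)
  intro r c p hp
  have hlim : Tendsto
      (fun n => ∑ α, ∑ β, (starRingEnd ℂ) (c α) * c β * (J (p α) (p β) - tower m φ K n (p α) (p β)))
      atTop (𝓝 (∑ α, ∑ β, (starRingEnd ℂ) (c α) * c β * (J (p α) (p β) - Kinf (p α) (p β)))) := by
    apply tendsto_finset_sum
    intro α _
    apply tendsto_finset_sum
    intro β _
    exact (tendsto_const_nhds.sub (hKinf _ (hp α) _ (hp β))).const_mul _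
  exact ge_of_tendsto' hlim fun n => hPDn n r c p hp
end

section
/- Fix s,t ∈ Y. Then the process (M_n(s,t;·))_{n≥0} is a complex-valued martingale on (Ω,μ) with respect to the filtration (F_n): each M_n(s,t;·) is F_n-measurable and integrable with E[M_{n+1}(s,t;·) | F_n] = M_n(s,t;·). Moreover, ∫_Ω M_n(s,t;ω) dμ(ω) = J(s,t) for every n ≥ 0. -/
open MeasureTheory Filter Topology
open scoped BigOperators ComplexOrder ENNReal

/-- The sampled process `Mₙ(s,t;ω) = mⁿ J(φ_{ω|n}(s), φ_{ω|n}(t))`. -/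
noncomputable def Mart {X : Type*} (m : ℕ) (φ : Fin m → X → X) (J : X → X → ℂ)
    (s t : X) (n : ℕ) (ω : ℕ → Fin m) : ℂ :=
  (m : ℂ) ^ n *
    J (phiW φ (fun i : Fin n => ω (i : ℕ)) s) (phiW φ (fun i : Fin n => ω (i : ℕ)) t)

/-- The σ-algebra `Fₙ` on `Ω = {1,…,m}^ℕ` generated by the first `n` coordinates. -/
def Filt (m n : ℕ) : MeasurableSpace (ℕ → Fin m) :=
  MeasurableSpace.comap (fun ω => (fun i : Fin n => ω (i : ℕ))) inferInstance

section aux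
variable {X : Type*} {m : ℕ} (φ : Fin m → X → X) (J : X → X → ℂ)

lemma phiW_snoc {n : ℕ} (w : Fin n → Fin m) (j : Fin m) (x : X) :
    phiW φ (Fin.snoc w j) x = φ j (phiW φ w x) := by
  have h1 : (fun i : Fin n => (Fin.snoc w j : Fin (n+1) → Fin m) i.castSucc) = w := by
    funext i; exact Fin.snoc_castSucc (α := fun _ => Fin m) j w i
  show φ ((Fin.snoc w j : Fin (n+1) → Fin m) (Fin.last n))
      (phiW φ (fun i : Fin n => (Fin.snoc w j : Fin (n+1) → Fin m) i.castSucc) x) = _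
  rw [h1, Fin.snoc_last]

lemma snoc_bijective (n : ℕ) :
    Function.Bijective
      (fun p : (Fin n → Fin m) × Fin m => (Fin.snoc p.1 p.2 : Fin (n+1) → Fin m)) := by
  apply Function.bijective_iff_has_inverse.2
  refine ⟨fun w => ⟨Fin.init w, w (Fin.last n)⟩, fun p => ?_, fun w => Fin.snoc_init_self w⟩
  simp [Fin.init_snoc, Fin.snoc_last]

lemma phiW_mem {Y : Set X} (hY : ∀ i : Fin m, ∀ x ∈ Y, φ i x ∈ Y) :
    ∀ {n : ℕ} (w : Fin n → Fin m) {x : X}, x ∈ Y → phiW φ w x ∈ Y := by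
  intro n
  induction n with
  | zero => intro w x hx; exact hx
  | succ n ih => intro w x hx; exact hY _ _ (ih _ hx)

lemma sum_phiW {Y : Set X} (hY : ∀ i : Fin m, ∀ x ∈ Y, φ i x ∈ Y)
    (hJinv : ∀ s ∈ Y, ∀ t ∈ Y, ∑ i : Fin m, J (φ i s) (φ i t) = J s t) :
    ∀ (n : ℕ) {u v : X}, u ∈ Y → v ∈ Y →
      ∑ w : Fin n → Fin m, J (phiW φ w u) (phiW φ w v) = J u v := by
  intro n
  induction n with
  | zero =>
    intro u v hu hv
    simp only [Finset.univ_unique, Finset.sum_singleton]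
    rfl
  | succ n ih =>
    intro u v hu hv
    rw [← Fintype.sum_bijective _ (snoc_bijective n)
      (fun p : (Fin n → Fin m) × Fin m =>
        J (phiW φ (Fin.snoc p.1 p.2) u) (phiW φ (Fin.snoc p.1 p.2) v))
      (fun w => J (phiW φ w u) (phiW φ w v)) (fun p => rfl)]
    rw [Fintype.sum_prod_type]
    simp only [phiW_snoc]
    calc ∑ w : Fin n → Fin m, ∑ j : Fin m, J (φ j (phiW φ w u)) (φ j (phiW φ w v))
        = ∑ w : Fin n → Fin m, J (phiW φ w u) (phiW φ w v) := by
          refine Finset.sum_congr rfl fun w _ => ?_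
          exact hJinv _ (phiW_mem φ hY w hu) _ (phiW_mem φ hY w hv)
      _ = J u v := ih hu hv

def cyl (m n : ℕ) (w : Fin n → Fin m) : Set (ℕ → Fin m) :=
  {ω | ∀ i : Fin n, ω (i : ℕ) = w i}

lemma cyl_eq (m n : ℕ) (w : Fin n → Fin m) :
    cyl m n w = (fun ω : ℕ → Fin m => fun i : Fin n => ω (i : ℕ)) ⁻¹' {w} := by
  ext ω
  simp [cyl, funext_iff]

lemma measurable_proj (m n : ℕ) :
    Measurable (fun ω : ℕ → Fin m => fun i : Fin n => ω (i : ℕ)) :=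
  measurable_pi_lambda _ fun i => measurable_pi_apply _

lemma measurableSet_cyl (m n : ℕ) (w : Fin n → Fin m) : MeasurableSet (cyl m n w) := by
  rw [cyl_eq]
  exact measurable_proj m n (measurableSet_singleton w)

lemma mart_eq_sum (s t : X) (n : ℕ) :
    Mart m φ J s t n = fun ω => ∑ w : Fin n → Fin m,
      (cyl m n w).indicator
        (fun _ => (m : ℂ) ^ n * J (phiW φ w s) (phiW φ w t)) ω := by
  funext ω
  rw [Finset.sum_eq_single (fun i : Fin n => ω (i : ℕ))]
  · rw [Set.indicator_of_mem
      (show ω ∈ cyl m n (fun i : Fin n => ω (i : ℕ)) from fun i => rfl)]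
    rfl
  · intro w _ hw
    refine Set.indicator_of_notMem (fun hmem => hw ?_) _
    exact (funext fun i => (hmem i)).symm ▸ rfl
  · simp

lemma integrable_mart (s t : X) (n : ℕ) (ν : Measure (ℕ → Fin m)) [IsFiniteMeasure ν] :
    Integrable (Mart m φ J s t n) ν := by
  rw [mart_eq_sum]
  exact integrable_finset_sum _ fun w _ =>
    (integrable_const _).indicator (measurableSet_cyl m n w)

lemma integral_mart (s t : X) (n : ℕ) (ν : Measure (ℕ → Fin m)) [IsFiniteMeasure ν] :
    ∫ ω, Mart m φ J s t n ω ∂ν = ∑ w : Fin n → Fin m,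
      (ν (cyl m n w)).toReal • ((m : ℂ) ^ n * J (phiW φ w s) (phiW φ w t)) := by
  simp only [mart_eq_sum φ J s t n]
  rw [integral_finset_sum _ fun w _ =>
    (integrable_const _).indicator (measurableSet_cyl m n w)]
  exact Finset.sum_congr rfl fun w _ => integral_indicator_const _ (measurableSet_cyl m n w)

lemma scal (hm : 1 ≤ m) (n : ℕ) (z : ℂ) :
    ((((m : ℝ≥0∞))⁻¹ ^ n).toReal) • ((m : ℂ) ^ n * z) = z := by
  have hm0 : (m : ℂ) ≠ 0 := Nat.cast_ne_zero.2 (by omega)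
  rw [ENNReal.toReal_pow, ENNReal.toReal_inv, ENNReal.toReal_natCast, Complex.real_smul]
  push_cast
  rw [← mul_assoc, ← mul_pow, inv_mul_cancel₀ hm0, one_pow, one_mul]

end aux

/-- `(Mₙ(s,t;·))ₙ` is a complex-valued martingale for the coordinate filtration, with
constant expectation `J(s,t)`. -/
theorem stmt12 {X : Type*} (m : ℕ) (hm : 1 ≤ m) (φ : Fin m → X → X)
    (Y : Set X) (hY : ∀ i : Fin m, ∀ x ∈ Y, φ i x ∈ Y)
    (J : X → X → ℂ) (hJpd : IsPDOn Y J)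
    (hJinv : ∀ s ∈ Y, ∀ t ∈ Y, ∑ i : Fin m, J (φ i s) (φ i t) = J s t)
    (μ : Measure (ℕ → Fin m)) (hprob : IsProbabilityMeasure μ)
    (hcyl : ∀ (n : ℕ) (w : Fin n → Fin m),
      μ {ω | ∀ i : Fin n, ω (i : ℕ) = w i} = ((m : ℝ≥0∞))⁻¹ ^ n)
    (s t : X) (hs : s ∈ Y) (ht : t ∈ Y) :
    (∀ n : ℕ, StronglyMeasurable[Filt m n] (Mart m φ J s t n)) ∧
    (∀ n : ℕ, Integrable (Mart m φ J s t n) μ) ∧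
    (∀ n : ℕ, μ[Mart m φ J s t (n + 1)|Filt m n] =ᵐ[μ] Mart m φ J s t n) ∧
    (∀ n : ℕ, ∫ ω, Mart m φ J s t n ω ∂μ = J s t) := by
  classical
  have hcyl' : ∀ (n : ℕ) (w : Fin n → Fin m), μ (cyl m n w) = ((m : ℝ≥0∞))⁻¹ ^ n :=
    fun n w => hcyl n w
  have hle : ∀ n : ℕ, Filt m n ≤ (inferInstance : MeasurableSpace (ℕ → Fin m)) := by
    intro n A hA
    obtain ⟨S, hS, rfl⟩ := hA
    exact measurable_proj m n hS
  -- strong measurability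
  have hsm : ∀ n : ℕ, StronglyMeasurable[Filt m n] (Mart m φ J s t n) := by
    intro n
    have hπ : @Measurable _ _ (Filt m n) _
        (fun ω : ℕ → Fin m => fun i : Fin n => ω (i : ℕ)) :=
      fun S hS => ⟨S, hS, rfl⟩
    have : @Measurable _ _ (Filt m n) _ (Mart m φ J s t n) := by
      exact (measurable_of_countable
        (fun w : Fin n → Fin m =>
          (m : ℂ) ^ n * J (phiW φ w s) (phiW φ w t))).comp hπ
    exact this.stronglyMeasurable
  have hint : ∀ n : ℕ, Integrable (Mart m φ J s t n) μ :=
    fun n => integrable_mart φ J s t n μ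
  -- integral identity
  have hintgl : ∀ n : ℕ, ∫ ω, Mart m φ J s t n ω ∂μ = J s t := by
    intro n
    rw [integral_mart]
    calc ∑ w : Fin n → Fin m, (μ (cyl m n w)).toReal •
          ((m : ℂ) ^ n * J (phiW φ w s) (phiW φ w t))
        = ∑ w : Fin n → Fin m, J (phiW φ w s) (phiW φ w t) := by
          refine Finset.sum_congr rfl fun w _ => ?_
          rw [hcyl' n w, scal hm]
      _ = J s t := sum_phiW φ J hY hJinv n hs ht
  refine ⟨hsm, hint, fun n => ?_, hintgl⟩
  -- martingale property
  refine (ae_eq_condExp_of_forall_setIntegral_eq (hle n) (hint (n+1))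
    (fun A _ _ => (hint n).integrableOn)
    (fun A hA _ => ?_) (hsm n).aestronglyMeasurable).symm
  obtain ⟨S, -, rfl⟩ := hA
  set π : (ℕ → Fin m) → (Fin n → Fin m) := fun ω => fun i : Fin n => ω (i : ℕ) with hπ
  have hmem1 : ∀ (w : Fin n → Fin m) (ω : ℕ → Fin m), ω ∈ cyl m n w → π ω = w := by
    intro w ω hω
    funext i
    exact hω i
  have hmem2 : ∀ (w : Fin n → Fin m) (j : Fin m) (ω : ℕ → Fin m),
      ω ∈ cyl m (n+1) (Fin.snoc w j) → π ω = w := by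
    intro w j ω hω
    funext i
    have h := hω i.castSucc
    rw [Fin.coe_castSucc] at h
    rw [show π ω i = ω (i : ℕ) from rfl, h]
    exact Fin.snoc_castSucc (α := fun _ => Fin m) j w i
  have hmeas1 : ∀ w : Fin n → Fin m,
      μ (cyl m n w ∩ π ⁻¹' S) = if w ∈ S then ((m : ℝ≥0∞))⁻¹ ^ n else 0 := by
    intro w
    by_cases hw : w ∈ S
    · rw [if_pos hw, Set.inter_eq_left.2 (fun ω hω => by
        show π ω ∈ S
        rw [hmem1 w ω hω]; exact hw), hcyl' n w]
    · rw [if_neg hw]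
      have : cyl m n w ∩ π ⁻¹' S = ∅ := by
        ext ω
        simp only [Set.mem_inter_iff, Set.mem_preimage, Set.mem_empty_iff_false, iff_false,
          not_and]
        intro h1 h2
        exact hw (hmem1 w ω h1 ▸ h2)
      rw [this, measure_empty]
  have hmeas2 : ∀ (w : Fin n → Fin m) (j : Fin m),
      μ (cyl m (n+1) (Fin.snoc w j) ∩ π ⁻¹' S)
        = if w ∈ S then ((m : ℝ≥0∞))⁻¹ ^ (n+1) else 0 := by
    intro w j
    by_cases hw : w ∈ S
    · rw [if_pos hw, Set.inter_eq_left.2 (fun ω hω => by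
        show π ω ∈ S
        rw [hmem2 w j ω hω]; exact hw), hcyl' (n+1) (Fin.snoc w j)]
    · rw [if_neg hw]
      have : cyl m (n+1) (Fin.snoc w j) ∩ π ⁻¹' S = ∅ := by
        ext ω
        simp only [Set.mem_inter_iff, Set.mem_preimage, Set.mem_empty_iff_false, iff_false,
          not_and]
        intro h1 h2
        exact hw (hmem2 w j ω h1 ▸ h2)
      rw [this, measure_empty]
  rw [integral_mart, integral_mart]
  rw [← Fintype.sum_bijective _ (snoc_bijective n)
    (fun p : (Fin n → Fin m) × Fin m =>
      ((μ.restrict (π ⁻¹' S)) (cyl m (n+1) (Fin.snoc p.1 p.2))).toReal •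
        ((m : ℂ) ^ (n+1) * J (phiW φ (Fin.snoc p.1 p.2) s) (phiW φ (Fin.snoc p.1 p.2) t)))
    _ (fun p => rfl)]
  rw [Fintype.sum_prod_type]
  refine Finset.sum_congr rfl fun w _ => ?_
  have hr1 : (μ.restrict (π ⁻¹' S)) (cyl m n w) = μ (cyl m n w ∩ π ⁻¹' S) :=
    Measure.restrict_apply (measurableSet_cyl m n w)
  have hr2 : ∀ j : Fin m, (μ.restrict (π ⁻¹' S)) (cyl m (n+1) (Fin.snoc w j))
      = μ (cyl m (n+1) (Fin.snoc w j) ∩ π ⁻¹' S) :=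
    fun j => Measure.restrict_apply (measurableSet_cyl m (n+1) (Fin.snoc w j))
  simp only [hr1, hr2, hmeas1 w, hmeas2 w]
  by_cases hw : w ∈ S
  · simp only [if_pos hw, scal hm, phiW_snoc]
    exact (hJinv _ (phiW_mem φ hY w hs) _ (phiW_mem φ hY w ht)).symm
  · simp only [if_neg hw, ENNReal.toReal_zero, zero_smul, Finset.sum_const_zero]
end
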